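/- Let V be a finite set, d : V → ℕ, let u, v, w ∈ V be pairwise distinct with S = {u, v, w}, let x, y ∉ V be two distinct new elements, and let F be a set of unordered pairs of distinct elements of V containing no pair with both elements in S. Then there exists a simple graph G on V with deg_G(z) = d(z) for all z ∈ V, with no edge of G in F, and with exactly two edges of G having both endpoints in S, if and only if there exists a simple graph G' on V ∪ {x, y} with deg_{G'}(z) = d(z) for all z ∈ V, deg_{G'}(x) = 3, deg_{G'}(y) = 1, the neighbors of x in G' being exactly u, v, w, the unique neighbor of y in G' belonging to S, no edge of G' having both endpoints in S, and no edge of G' in F. -/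
import Mathlib

set_option linter.unusedSectionVars false

open Finset

section
variable {V : Type*} [Fintype V] [DecidableEq V]
variable {V : Type*} [Fintype V] [DecidableEq V]

lemma card_filter_succ' (s : Finset V) (p : V → Prop) [DecidablePred p] (b : V)
    (hb : b ∈ s) (hpb : p b) :
    (s.filter fun t => p t ∧ t ≠ b).card + 1 = (s.filter p).card := by
  have h : (s.filter fun t => p t ∧ t ≠ b) = (s.filter p).erase b := by
    ext t; simp only [Finset.mem_filter, Finset.mem_erase]; tauto
  rw [h, Finset.card_erase_add_one (by simp [hb, hpb])]

lemma degree_eq_card' (G : SimpleGraph V) [DecidableRel G.Adj] (z : V) :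
    G.degree z = (univ.filter (G.Adj z)).card := by
  rw [← SimpleGraph.neighborFinset_eq_filter]; rfl

lemma degree_sum_split' (G : SimpleGraph (V ⊕ Fin 2)) [DecidableRel G.Adj]
    (p : V ⊕ Fin 2) :
    G.degree p = (univ.filter fun t : V => G.Adj p (Sum.inl t)).card
      + ((if G.Adj p (Sum.inr 0) then 1 else 0) + (if G.Adj p (Sum.inr 1) then 1 else 0)) := by
  rw [degree_eq_card', Finset.card_filter, Fintype.sum_sum_type, Fin.sum_univ_two,
    Finset.card_filter]

def fRel' (G : SimpleGraph V) (a b c : V) : V ⊕ Fin 2 → V ⊕ Fin 2 → Prop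
  | Sum.inl s, Sum.inl t => G.Adj s t ∧ s(s, t) ≠ s(a, b) ∧ s(s, t) ≠ s(a, c)
  | Sum.inl s, Sum.inr i => (i = 0 ∧ (s = a ∨ s = b ∨ s = c)) ∨ (i = 1 ∧ s = a)
  | Sum.inr _, _ => False

instance fRelDec' (G : SimpleGraph V) [DecidableRel G.Adj] (a b c : V) :
    DecidableRel (fRel' G a b c) := fun p q =>
  match p, q with
  | Sum.inl _, Sum.inl _ => inferInstanceAs (Decidable (_ ∧ _))
  | Sum.inl _, Sum.inr _ => inferInstanceAs (Decidable (_ ∨ _))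
  | Sum.inr _, Sum.inl _ => inferInstanceAs (Decidable False)
  | Sum.inr _, Sum.inr _ => inferInstanceAs (Decidable False)

def FGraph' (G : SimpleGraph V) (a b c : V) : SimpleGraph (V ⊕ Fin 2) :=
  SimpleGraph.fromRel (fRel' G a b c)

instance FGraphDec' (G : SimpleGraph V) [DecidableRel G.Adj] (a b c : V) :
    DecidableRel (FGraph' G a b c).Adj := fun p q =>
  inferInstanceAs (Decidable (p ≠ q ∧ (fRel' G a b c p q ∨ fRel' G a b c q p)))

lemma FG_adj_ll' (G : SimpleGraph V) (a b c : V) (s t : V) :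
    (FGraph' G a b c).Adj (Sum.inl s) (Sum.inl t) ↔
      G.Adj s t ∧ s(s, t) ≠ s(a, b) ∧ s(s, t) ≠ s(a, c) := by
  rw [FGraph', SimpleGraph.fromRel_adj]
  constructor
  · rintro ⟨hne, h | h⟩
    · exact h
    · exact ⟨h.1.symm, by rw [Sym2.eq_swap]; exact h.2.1, by rw [Sym2.eq_swap]; exact h.2.2⟩
  · intro h
    exact ⟨by simpa using h.1.ne, Or.inl h⟩

lemma FG_adj_l0' (G : SimpleGraph V) (a b c : V) (s : V) :
    (FGraph' G a b c).Adj (Sum.inl s) (Sum.inr 0) ↔ s = a ∨ s = b ∨ s = c := by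
  rw [FGraph', SimpleGraph.fromRel_adj]
  simp [fRel']

lemma FG_adj_l1' (G : SimpleGraph V) (a b c : V) (s : V) :
    (FGraph' G a b c).Adj (Sum.inl s) (Sum.inr 1) ↔ s = a := by
  rw [FGraph', SimpleGraph.fromRel_adj]
  simp [fRel']

lemma FG_adj_rr' (G : SimpleGraph V) (a b c : V) (i j : Fin 2) :
    ¬ (FGraph' G a b c).Adj (Sum.inr i) (Sum.inr j) := by
  rw [FGraph', SimpleGraph.fromRel_adj]
  simp [fRel']

lemma gadget_forward (d : V → ℕ) (a b c : V) (hab : a ≠ b) (hac : a ≠ c) (hbc : b ≠ c)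
    (F : Set (Sym2 V))
    (G : SimpleGraph V) [DecidableRel G.Adj]
    (hdeg : ∀ z, G.degree z = d z) (hF : ∀ e ∈ F, e ∉ G.edgeSet)
    (h1 : G.Adj a b) (h2 : G.Adj a c) (h3 : ¬ G.Adj b c) :
    ∃ (G' : SimpleGraph (V ⊕ Fin 2)) (_ : DecidableRel G'.Adj),
      (∀ z : V, G'.degree (Sum.inl z) = d z) ∧
        G'.degree (Sum.inr 0) = 3 ∧ G'.degree (Sum.inr 1) = 1 ∧
        (∀ z, G'.Adj (Sum.inr 0) z ↔ z = Sum.inl a ∨ z = Sum.inl b ∨ z = Sum.inl c) ∧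
        (∀ z, G'.Adj (Sum.inr 1) z → z = Sum.inl a) ∧
        (∀ s t : V, s ∈ ({a, b, c} : Set V) → t ∈ ({a, b, c} : Set V) →
          ¬ G'.Adj (Sum.inl s) (Sum.inl t)) ∧
        (∀ s t : V, s(s, t) ∈ F → ¬ G'.Adj (Sum.inl s) (Sum.inl t)) := by
  refine ⟨FGraph' G a b c, inferInstance, ?_, ?_, ?_, ?_, ?_, ?_, ?_⟩
  · -- degrees on V
    intro z
    rw [degree_sum_split']
    by_cases hza : z = a
    · subst hza
      rw [if_pos ((FG_adj_l0' G z b c z).mpr (Or.inl rfl)),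
        if_pos ((FG_adj_l1' G z b c z).mpr rfl)]
      have e3 : (univ.filter fun t : V => (FGraph' G z b c).Adj (Sum.inl z) (Sum.inl t))
          = univ.filter fun t => (G.Adj z t ∧ t ≠ b) ∧ t ≠ c := by
        ext t
        simp only [Finset.mem_filter, FG_adj_ll', ne_eq, Sym2.congr_right]
        tauto
      have e2 : (univ.filter fun t => (G.Adj z t ∧ t ≠ b) ∧ t ≠ c).card + 1
          = (univ.filter fun t => G.Adj z t ∧ t ≠ b).card :=
        card_filter_succ' univ (fun t => G.Adj z t ∧ t ≠ b) c (mem_univ c) ⟨h2, Ne.symm hbc⟩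
      have e1 : (univ.filter fun t => G.Adj z t ∧ t ≠ b).card + 1
          = (univ.filter (G.Adj z)).card :=
        card_filter_succ' univ (G.Adj z) b (mem_univ b) h1
      have e0 : (univ.filter (G.Adj z)).card = d z := by rw [← degree_eq_card']; exact hdeg z
      rw [e3]; omega
    · by_cases hzb : z = b
      · subst hzb
        rw [if_pos ((FG_adj_l0' G a z c z).mpr (Or.inr (Or.inl rfl))),
          if_neg (fun h => hza ((FG_adj_l1' G a z c z).mp h))]
        have e3 : (univ.filter fun t : V => (FGraph' G a z c).Adj (Sum.inl z) (Sum.inl t))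
            = univ.filter fun t => G.Adj z t ∧ t ≠ a := by
          ext t
          simp only [Finset.mem_filter, FG_adj_ll', ne_eq, Sym2.eq_iff]
          constructor
          · rintro ⟨_, h, hp1, hp2⟩
            exact ⟨‹_›, h, fun hta => hp1 (Or.inr ⟨by trivial, hta⟩)⟩
          · rintro ⟨hu, h, hta⟩
            refine ⟨hu, h, ?_, ?_⟩
            · rintro (⟨h1', h2'⟩ | ⟨h1', h2'⟩)
              · exact hza h1'
              · exact hta h2'
            · rintro (⟨h1', h2'⟩ | ⟨h1', h2'⟩)
              · exact hza h1'
              · exact hbc h1'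
        have e1 : (univ.filter fun t => G.Adj z t ∧ t ≠ a).card + 1
            = (univ.filter (G.Adj z)).card :=
          card_filter_succ' univ (G.Adj z) a (mem_univ a) h1.symm
        have e0 : (univ.filter (G.Adj z)).card = d z := by rw [← degree_eq_card']; exact hdeg z
        rw [e3]; omega
      · by_cases hzc : z = c
        · subst hzc
          rw [if_pos ((FG_adj_l0' G a b z z).mpr (Or.inr (Or.inr rfl))),
            if_neg (fun h => hza ((FG_adj_l1' G a b z z).mp h))]
          have e3 : (univ.filter fun t : V => (FGraph' G a b z).Adj (Sum.inl z) (Sum.inl t))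
              = univ.filter fun t => G.Adj z t ∧ t ≠ a := by
            ext t
            simp only [Finset.mem_filter, FG_adj_ll', ne_eq, Sym2.eq_iff]
            constructor
            · rintro ⟨_, h, hp1, hp2⟩
              exact ⟨‹_›, h, fun hta => hp2 (Or.inr ⟨by trivial, hta⟩)⟩
            · rintro ⟨hu, h, hta⟩
              refine ⟨hu, h, ?_, ?_⟩
              · rintro (⟨h1', h2'⟩ | ⟨h1', h2'⟩)
                · exact hza h1'
                · exact hbc h1'.symm
              · rintro (⟨h1', h2'⟩ | ⟨h1', h2'⟩)
                · exact hza h1'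
                · exact hta h2'
          have e1 : (univ.filter fun t => G.Adj z t ∧ t ≠ a).card + 1
              = (univ.filter (G.Adj z)).card :=
            card_filter_succ' univ (G.Adj z) a (mem_univ a) h2.symm
          have e0 : (univ.filter (G.Adj z)).card = d z := by rw [← degree_eq_card']; exact hdeg z
          rw [e3]; omega
        · rw [if_neg (fun h => by rcases (FG_adj_l0' G a b c z).mp h with h|h|h <;> tauto),
            if_neg (fun h => hza ((FG_adj_l1' G a b c z).mp h))]
          have e3 : (univ.filter fun t : V => (FGraph' G a b c).Adj (Sum.inl z) (Sum.inl t))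
              = univ.filter (G.Adj z) := by
            ext t
            simp only [Finset.mem_filter, FG_adj_ll', ne_eq, Sym2.eq_iff]
            constructor
            · rintro ⟨_, h, _, _⟩; exact ⟨‹_›, h⟩
            · rintro ⟨hu, h⟩
              refine ⟨hu, h, ?_, ?_⟩
              · rintro (⟨h1', -⟩ | ⟨h1', -⟩)
                · exact hza h1'
                · exact hzb h1'
              · rintro (⟨h1', -⟩ | ⟨h1', -⟩)
                · exact hza h1'
                · exact hzc h1'
          have e0 : (univ.filter (G.Adj z)).card = d z := by rw [← degree_eq_card']; exact hdeg z
          rw [e3]; omega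
  · -- degree x = 3
    rw [degree_sum_split', if_neg (FG_adj_rr' G a b c 0 0), if_neg (FG_adj_rr' G a b c 0 1)]
    have e3 : (univ.filter fun t : V => (FGraph' G a b c).Adj (Sum.inr 0) (Sum.inl t))
        = ({a, b, c} : Finset V) := by
      ext t
      simp only [Finset.mem_filter, Finset.mem_insert, Finset.mem_singleton, mem_univ,
        true_and]
      rw [(FGraph' G a b c).adj_comm, FG_adj_l0']
    rw [e3, Finset.card_insert_of_notMem (by simp [hab, hac]),
      Finset.card_insert_of_notMem (by simp [hbc]), Finset.card_singleton]
  · -- degree y = 1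
    rw [degree_sum_split', if_neg (FG_adj_rr' G a b c 1 0), if_neg (FG_adj_rr' G a b c 1 1)]
    have e3 : (univ.filter fun t : V => (FGraph' G a b c).Adj (Sum.inr 1) (Sum.inl t))
        = ({a} : Finset V) := by
      ext t
      simp only [Finset.mem_filter, Finset.mem_singleton, mem_univ, true_and]
      rw [(FGraph' G a b c).adj_comm, FG_adj_l1']
    rw [e3, Finset.card_singleton]
  · -- x neighbors
    rintro (s | i)
    · rw [(FGraph' G a b c).adj_comm, FG_adj_l0']
      simp
    · simp only [FG_adj_rr']
      constructor
      · exact fun h => h.elim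
      · rintro (h | h | h) <;> exact absurd h (by simp)
  · -- y neighbor
    rintro (s | i) h
    · rw [(FGraph' G a b c).adj_comm, FG_adj_l1'] at h
      simp [h]
    · exact absurd h (FG_adj_rr' G a b c 1 i)
  · -- no S edges
    intro s t hs ht hadj
    rw [FG_adj_ll'] at hadj
    obtain ⟨hG, hp1, hp2⟩ := hadj
    simp only [Set.mem_insert_iff, Set.mem_singleton_iff] at hs ht
    rcases hs with rfl | rfl | rfl <;> rcases ht with rfl | rfl | rfl
    · exact hG.ne rfl
    · exact hp1 rfl
    · exact hp2 rfl
    · exact hp1 (Sym2.eq_swap)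
    · exact hG.ne rfl
    · exact h3 hG
    · exact hp2 (Sym2.eq_swap)
    · exact h3 hG.symm
    · exact hG.ne rfl
  · -- F
    intro s t hst hadj
    rw [FG_adj_ll'] at hadj
    exact hF _ hst (G.mem_edgeSet.mpr hadj.1)

def BGraph' (G' : SimpleGraph (V ⊕ Fin 2)) (a b c : V) : SimpleGraph V :=
  SimpleGraph.fromRel (fun s t => G'.Adj (Sum.inl s) (Sum.inl t) ∨ s(s, t) = s(a, b) ∨ s(s, t) = s(a, c))

instance BGraphDec' (G' : SimpleGraph (V ⊕ Fin 2)) [DecidableRel G'.Adj] (a b c : V) :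
    DecidableRel (BGraph' G' a b c).Adj := fun s t =>
  inferInstanceAs (Decidable (s ≠ t ∧ _))

lemma BG_adj' (G' : SimpleGraph (V ⊕ Fin 2)) (a b c : V) (hab : a ≠ b) (hac : a ≠ c)
    (s t : V) :
    (BGraph' G' a b c).Adj s t ↔
      G'.Adj (Sum.inl s) (Sum.inl t) ∨ s(s, t) = s(a, b) ∨ s(s, t) = s(a, c) := by
  rw [BGraph', SimpleGraph.fromRel_adj]
  constructor
  · rintro ⟨hne, h | h⟩
    · exact h
    · rcases h with h | h | h
      · exact Or.inl h.symm
      · exact Or.inr (Or.inl (by rw [Sym2.eq_swap]; exact h))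
      · exact Or.inr (Or.inr (by rw [Sym2.eq_swap]; exact h))
  · intro h
    refine ⟨?_, Or.inl h⟩
    rintro rfl
    rcases h with h | h | h
    · exact h.ne rfl
    · rw [Sym2.eq_iff] at h; rcases h with ⟨rfl, rfl⟩ | ⟨rfl, rfl⟩ <;> exact hab rfl
    · rw [Sym2.eq_iff] at h; rcases h with ⟨rfl, rfl⟩ | ⟨rfl, rfl⟩ <;> exact hac rfl

lemma gadget_backward (d : V → ℕ) (a b c : V) (hab : a ≠ b) (hac : a ≠ c) (hbc : b ≠ c)
    (F : Set (Sym2 V))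
    (hFS : ∀ s t : V, s(s, t) ∈ F → s ∉ ({a, b, c} : Set V) ∨ t ∉ ({a, b, c} : Set V))
    (G' : SimpleGraph (V ⊕ Fin 2)) [DecidableRel G'.Adj]
    (hdeg : ∀ z : V, G'.degree (Sum.inl z) = d z)
    (hy1 : G'.degree (Sum.inr 1) = 1)
    (hx : ∀ z, G'.Adj (Sum.inr 0) z ↔ z = Sum.inl a ∨ z = Sum.inl b ∨ z = Sum.inl c)
    (hya : G'.Adj (Sum.inr 1) (Sum.inl a))
    (hab' : ¬ G'.Adj (Sum.inl a) (Sum.inl b)) (hac' : ¬ G'.Adj (Sum.inl a) (Sum.inl c))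
    (hbc' : ¬ G'.Adj (Sum.inl b) (Sum.inl c))
    (hF : ∀ s t : V, s(s, t) ∈ F → ¬ G'.Adj (Sum.inl s) (Sum.inl t)) :
    ∃ (G : SimpleGraph V) (_ : DecidableRel G.Adj),
      (∀ z, G.degree z = d z) ∧ (∀ e ∈ F, e ∉ G.edgeSet) ∧
        G.Adj a b ∧ G.Adj a c ∧ ¬ G.Adj b c := by
  have huniq : ∀ z, G'.Adj (Sum.inr 1) z → z = Sum.inl a := by
    have h1 : (G'.neighborFinset (Sum.inr 1)).card = 1 := hy1
    obtain ⟨e, he⟩ := Finset.card_eq_one.mp h1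
    have ha : Sum.inl a ∈ G'.neighborFinset (Sum.inr 1) :=
      (SimpleGraph.mem_neighborFinset _ _ _).mpr hya
    rw [he, Finset.mem_singleton] at ha
    intro z hz
    have hz' : z ∈ G'.neighborFinset (Sum.inr 1) :=
      (SimpleGraph.mem_neighborFinset _ _ _).mpr hz
    rw [he, Finset.mem_singleton] at hz'
    rw [hz', ← ha]
  refine ⟨BGraph' G' a b c, inferInstance, ?_, ?_, ?_, ?_, ?_⟩
  · -- degrees
    intro z
    rw [degree_eq_card']
    have hsplit := degree_sum_split' G' (Sum.inl z)
    rw [hdeg z] at hsplit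
    by_cases hza : z = a
    · subst hza
      rw [if_pos (((hx _).mpr (Or.inl rfl)).symm), if_pos hya.symm] at hsplit
      have e3 : (univ.filter fun t => ((BGraph' G' z b c).Adj z t ∧ t ≠ b) ∧ t ≠ c)
          = univ.filter fun t : V => G'.Adj (Sum.inl z) (Sum.inl t) := by
        ext t
        simp only [Finset.mem_filter, BG_adj' G' z b c hab hac, ne_eq, Sym2.congr_right]
        constructor
        · rintro ⟨-, ⟨h | h | h, htb⟩, htc⟩
          · exact ⟨mem_univ t, h⟩
          · exact absurd h htb
          · exact absurd h htc
        · rintro ⟨-, h⟩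
          exact ⟨mem_univ t, ⟨Or.inl h, fun e => hab' (e ▸ h)⟩, fun e => hac' (e ▸ h)⟩
      have e2 : (univ.filter fun t => ((BGraph' G' z b c).Adj z t ∧ t ≠ b) ∧ t ≠ c).card + 1
          = (univ.filter fun t => (BGraph' G' z b c).Adj z t ∧ t ≠ b).card :=
        card_filter_succ' univ _ c (mem_univ c)
          ⟨(BG_adj' G' z b c hab hac z c).mpr (Or.inr (Or.inr rfl)), Ne.symm hbc⟩
      have e1 : (univ.filter fun t => (BGraph' G' z b c).Adj z t ∧ t ≠ b).card + 1
          = (univ.filter ((BGraph' G' z b c).Adj z)).card :=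
        card_filter_succ' univ _ b (mem_univ b)
          ((BG_adj' G' z b c hab hac z b).mpr (Or.inr (Or.inl rfl)))
      rw [e3] at e2
      omega
    · by_cases hzb : z = b
      · subst hzb
        rw [if_pos (((hx _).mpr (Or.inr (Or.inl rfl))).symm),
          if_neg (fun h => hza (by simpa using huniq _ h.symm))] at hsplit
        have e3 : (univ.filter fun t => (BGraph' G' a z c).Adj z t ∧ t ≠ a)
            = univ.filter fun t : V => G'.Adj (Sum.inl z) (Sum.inl t) := by
          ext t
          simp only [Finset.mem_filter, BG_adj' G' a z c hab hac, ne_eq, Sym2.eq_iff]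
          constructor
          · rintro ⟨_, h | h | h, hta⟩
            · exact ⟨‹_›, h⟩
            · rcases h with ⟨h1', -⟩ | ⟨-, h2'⟩
              · exact absurd h1' hza
              · exact absurd h2' hta
            · rcases h with ⟨h1', -⟩ | ⟨h1', -⟩
              · exact absurd h1' hza
              · exact absurd h1' hbc
          · rintro ⟨hu, h⟩
            refine ⟨hu, Or.inl h, ?_⟩
            rintro rfl
            exact hab' h.symm
        have e1 : (univ.filter fun t => (BGraph' G' a z c).Adj z t ∧ t ≠ a).card + 1
            = (univ.filter ((BGraph' G' a z c).Adj z)).card :=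
          card_filter_succ' univ _ a (mem_univ a)
            ((BG_adj' G' a z c hab hac z a).mpr (Or.inr (Or.inl (Sym2.eq_swap))))
        rw [e3] at e1
        omega
      · by_cases hzc : z = c
        · subst hzc
          rw [if_pos (((hx _).mpr (Or.inr (Or.inr rfl))).symm),
            if_neg (fun h => hza (by simpa using huniq _ h.symm))] at hsplit
          have e3 : (univ.filter fun t => (BGraph' G' a b z).Adj z t ∧ t ≠ a)
              = univ.filter fun t : V => G'.Adj (Sum.inl z) (Sum.inl t) := by
            ext t
            simp only [Finset.mem_filter, BG_adj' G' a b z hab hac, ne_eq, Sym2.eq_iff]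
            constructor
            · rintro ⟨_, h | h | h, hta⟩
              · exact ⟨‹_›, h⟩
              · rcases h with ⟨h1', -⟩ | ⟨h1', -⟩
                · exact absurd h1' hza
                · exact absurd h1'.symm hbc
              · rcases h with ⟨h1', -⟩ | ⟨-, h2'⟩
                · exact absurd h1' hza
                · exact absurd h2' hta
            · rintro ⟨hu, h⟩
              refine ⟨hu, Or.inl h, ?_⟩
              rintro rfl
              exact hac' h.symm
          have e1 : (univ.filter fun t => (BGraph' G' a b z).Adj z t ∧ t ≠ a).card + 1
              = (univ.filter ((BGraph' G' a b z).Adj z)).card :=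
            card_filter_succ' univ _ a (mem_univ a)
              ((BG_adj' G' a b z hab hac z a).mpr (Or.inr (Or.inr (Sym2.eq_swap))))
          rw [e3] at e1
          omega
        · rw [if_neg (fun h => by rcases (hx _).mp h.symm with h'|h'|h' <;>
              simp only [Sum.inl.injEq] at h' <;> tauto),
            if_neg (fun h => hza (by simpa using huniq _ h.symm))] at hsplit
          have e3 : (univ.filter ((BGraph' G' a b c).Adj z))
              = univ.filter fun t : V => G'.Adj (Sum.inl z) (Sum.inl t) := by
            ext t
            simp only [Finset.mem_filter, BG_adj' G' a b c hab hac, ne_eq, Sym2.eq_iff]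
            constructor
            · rintro ⟨_, h | h | h⟩
              · exact ⟨‹_›, h⟩
              · rcases h with ⟨h1', -⟩ | ⟨h1', -⟩
                · exact absurd h1' hza
                · exact absurd h1' hzb
              · rcases h with ⟨h1', -⟩ | ⟨h1', -⟩
                · exact absurd h1' hza
                · exact absurd h1' hzc
            · rintro ⟨hu, h⟩
              exact ⟨hu, Or.inl h⟩
          rw [e3]
          omega
  · -- F
    intro e he
    induction e using Sym2.ind with
    | _ s t =>
      intro hmem
      rw [SimpleGraph.mem_edgeSet, BG_adj' G' a b c hab hac] at hmem
      rcases hmem with h | h | h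
      · exact hF s t he h
      · rcases hFS s t he with h' | h' <;> rw [Sym2.eq_iff] at h <;>
          rcases h with ⟨rfl, rfl⟩ | ⟨rfl, rfl⟩ <;> simp at h'
      · rcases hFS s t he with h' | h' <;> rw [Sym2.eq_iff] at h <;>
          rcases h with ⟨rfl, rfl⟩ | ⟨rfl, rfl⟩ <;> simp at h'
  · exact (BG_adj' G' a b c hab hac a b).mpr (Or.inr (Or.inl rfl))
  · exact (BG_adj' G' a b c hab hac a c).mpr (Or.inr (Or.inr rfl))
  · intro h
    rcases (BG_adj' G' a b c hab hac b c).mp h with h' | h' | h'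
    · exact hbc' h'
    · rw [Sym2.eq_iff] at h'
      rcases h' with ⟨h1, -⟩ | ⟨-, h2⟩
      · exact hab h1.symm
      · exact hac h2.symm
    · rw [Sym2.eq_iff] at h'
      rcases h' with ⟨h1, -⟩ | ⟨h1, -⟩
      · exact hab h1.symm
      · exact hbc h1
end

open Finset

/-- The gadget replacing the cut constraint `(S, d(S) - 4)` for `S = {u, v, w}` of size 3.
There is a simple graph `G` on `V` realizing `d`, avoiding all forbidden pairs of `F`, and
having exactly two edges with both endpoints in `S`, if and only if there is a simple
graph `G'` on `V ∪ {x, y}` (modeled as `V ⊕ Fin 2`, with `x = Sum.inr 0` and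
`y = Sum.inr 1`) realizing `d` on `V`, where `x` has degree `3` with neighbors exactly
`u, v, w`, `y` has degree `1` with its unique neighbor in `S`, no edge of `G'` has both
endpoints in `S`, and `G'` avoids all forbidden pairs of `F`. -/
theorem size_three_cut_gadget_two_edges {V : Type*} [Fintype V] [DecidableEq V]
    (d : V → ℕ) (u v w : V) (huv : u ≠ v) (huw : u ≠ w) (hvw : v ≠ w)
    (F : Set (Sym2 V)) (hFdiag : ∀ e ∈ F, ¬ e.IsDiag)
    (hFS : ∀ a b : V, s(a, b) ∈ F → a ∉ ({u, v, w} : Set V) ∨ b ∉ ({u, v, w} : Set V)) :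
    (∃ (G : SimpleGraph V) (_ : DecidableRel G.Adj),
        (∀ z, G.degree z = d z) ∧ (∀ e ∈ F, e ∉ G.edgeSet) ∧
          (if G.Adj u v then 1 else 0) + (if G.Adj u w then 1 else 0) +
            (if G.Adj v w then 1 else 0) = 2) ↔
      (∃ (G' : SimpleGraph (V ⊕ Fin 2)) (_ : DecidableRel G'.Adj),
        (∀ z : V, G'.degree (Sum.inl z) = d z) ∧
          G'.degree (Sum.inr 0) = 3 ∧ G'.degree (Sum.inr 1) = 1 ∧
          (∀ z, G'.Adj (Sum.inr 0) z ↔ z = Sum.inl u ∨ z = Sum.inl v ∨ z = Sum.inl w) ∧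
          (∀ z, G'.Adj (Sum.inr 1) z → z = Sum.inl u ∨ z = Sum.inl v ∨ z = Sum.inl w) ∧
          ¬ G'.Adj (Sum.inl u) (Sum.inl v) ∧ ¬ G'.Adj (Sum.inl u) (Sum.inl w) ∧
            ¬ G'.Adj (Sum.inl v) (Sum.inl w) ∧
          (∀ a b : V, s(a, b) ∈ F → ¬ G'.Adj (Sum.inl a) (Sum.inl b))) := by
  constructor
  · rintro ⟨G, hGd, hdeg, hF, hcount⟩
    by_cases h1 : G.Adj u v <;> by_cases h2 : G.Adj u w <;> by_cases h3 : G.Adj v w <;>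
      simp only [h1, h2, h3, if_true, if_false] at hcount
    · omega
    · -- edges uv, uw; apex u
      obtain ⟨G', inst, c1, c2, c3, c4, c5, c6, c7⟩ :=
        gadget_forward d u v w huv huw hvw F G hdeg hF h1 h2 h3
      exact ⟨G', inst, c1, c2, c3, c4, fun z h => Or.inl (c5 z h),
        c6 u v (by simp) (by simp), c6 u w (by simp) (by simp),
        c6 v w (by simp) (by simp), c7⟩
    · -- edges uv, vw; apex v
      obtain ⟨G', inst, c1, c2, c3, c4, c5, c6, c7⟩ :=
        gadget_forward d v u w (Ne.symm huv) hvw huw F G hdeg hF h1.symm h3 h2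
      exact ⟨G', inst, c1, c2, c3, fun z => (c4 z).trans (by tauto),
        fun z h => Or.inr (Or.inl (c5 z h)),
        c6 u v (by simp) (by simp), c6 u w (by simp) (by simp),
        c6 v w (by simp) (by simp), c7⟩
    · omega
    · -- edges uw, vw; apex w
      obtain ⟨G', inst, c1, c2, c3, c4, c5, c6, c7⟩ :=
        gadget_forward d w u v (Ne.symm huw) (Ne.symm hvw) huv F G hdeg hF h2.symm h3.symm h1
      exact ⟨G', inst, c1, c2, c3, fun z => (c4 z).trans (by tauto),
        fun z h => Or.inr (Or.inr (c5 z h)),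
        c6 u v (by simp) (by simp), c6 u w (by simp) (by simp),
        c6 v w (by simp) (by simp), c7⟩
    · omega
    · omega
    · omega
  · rintro ⟨G', inst, hdeg, hx3, hy1, hx, hy, h_uv, h_uw, h_vw, hF'⟩
    have hp : 0 < G'.degree (Sum.inr 1) := by rw [hy1]; norm_num
    obtain ⟨z0, hz0⟩ := (SimpleGraph.degree_pos_iff_exists_adj _ _).mp hp
    rcases hy z0 hz0 with h | h | h <;> subst h
    · obtain ⟨G, instG, c1, c2, c3, c4, c5⟩ :=
        gadget_backward d u v w huv huw hvw F hFS G' hdeg hy1 hx hz0 h_uv h_uw h_vw hF'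
      refine ⟨G, instG, c1, c2, ?_⟩
      rw [if_pos c3, if_pos c4, if_neg c5]
    · obtain ⟨G, instG, c1, c2, c3, c4, c5⟩ :=
        gadget_backward d v u w (Ne.symm huv) hvw huw F
          (fun s t h => by
            rcases hFS s t h with h' | h'
            · exact Or.inl (by simpa [or_comm, or_left_comm, or_assoc] using h')
            · exact Or.inr (by simpa [or_comm, or_left_comm, or_assoc] using h'))
          G' hdeg hy1 (fun z => (hx z).trans (by tauto)) hz0
          (fun h => h_uv h.symm) h_vw h_uw hF'
      refine ⟨G, instG, c1, c2, ?_⟩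
      rw [if_pos c3.symm, if_neg c5, if_pos c4]
    · obtain ⟨G, instG, c1, c2, c3, c4, c5⟩ :=
        gadget_backward d w u v (Ne.symm huw) (Ne.symm hvw) huv F
          (fun s t h => by
            rcases hFS s t h with h' | h'
            · exact Or.inl (by simpa [or_comm, or_left_comm, or_assoc] using h')
            · exact Or.inr (by simpa [or_comm, or_left_comm, or_assoc] using h'))
          G' hdeg hy1 (fun z => (hx z).trans (by tauto)) hz0
          (fun h => h_uw h.symm) (fun h => h_vw h.symm) h_uv hF'
      refine ⟨G, instG, c1, c2, ?_⟩
      rw [if_neg c5, if_pos c3.symm, if_pos c4.symm]
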